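/- Let A, B be nonzero real numbers. The real power series Σ_{i=0}^∞ c_i A^{i+1} B^i w^{2i+1} (viewed as a power series in w whose coefficient of w^{2i+1} is c_i A^{i+1} B^i and whose even-degree coefficients vanish) has radius of convergence exactly 1/(2√(|A·B|)). -/

import Mathlib

open Filter

lemma cat_le_four_pow (n : ℕ) : (catalan n : ℝ) ≤ 4 ^ n := by
  have h1 : catalan n ≤ n.centralBinom := by
    calc catalan n ≤ (n+1) * catalan n := Nat.le_mul_of_pos_left _ n.succ_pos
    _ = n.centralBinom := succ_mul_catalan_eq_centralBinom n
  have h2 : n.centralBinom ≤ 4 ^ n := by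
    rw [Nat.centralBinom_eq_two_mul_choose]
    calc (2*n).choose n ≤ ∑ m ∈ Finset.range (2*n+1), (2*n).choose m := by
          refine Finset.single_le_sum (fun i _ => Nat.zero_le _) ?_
          simp [Nat.lt_succ_iff]; omega
      _ = 2 ^ (2*n) := Nat.sum_range_choose (2*n)
      _ = 4 ^ n := by rw [pow_mul]; norm_num
  calc (catalan n : ℝ) ≤ (n.centralBinom : ℝ) := by exact_mod_cast h1
    _ ≤ 4 ^ n := by exact_mod_cast h2

lemma four_pow_le_cat (n : ℕ) (hn : 0 < n) :
    (4:ℝ) ^ n ≤ 2 * n * (n+1) * catalan n := by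
  have := Nat.four_pow_le_two_mul_self_mul_centralBinom n hn
  rw [← succ_mul_catalan_eq_centralBinom] at this
  calc (4:ℝ)^n ≤ ((2*n*((n+1)*catalan n) : ℕ) : ℝ) := by exact_mod_cast this
    _ = 2 * n * (n+1) * catalan n := by push_cast; ring

lemma term_abs (A B w : ℝ) (i : ℕ) :
    |(catalan i : ℝ) * A ^ (i + 1) * B ^ i * w ^ (2 * i + 1)|
      = |A| * |w| * ((catalan i : ℝ) * (|A * B| * w ^ 2) ^ i) := by
  have hc : |(catalan i : ℝ)| = (catalan i : ℝ) := abs_of_nonneg (by positivity)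
  rw [abs_mul, abs_mul, abs_mul, abs_pow, abs_pow, abs_pow, hc, abs_mul]
  have hw : |w| ^ (2 * i + 1) = |w| * (w ^ 2) ^ i := by
    rw [pow_succ, pow_mul, sq_abs, mul_comm]
  rw [hw, pow_succ]
  ring

/-- For nonzero reals `A, B`, the radius of convergence of the power
series `Σ_{i=0}^∞ c_i A^{i+1} B^i w^{2i+1}` is exactly `1/(2√|A·B|)`; that is,
`1/(2√|A·B|)` is the least upper bound of the set of `|w|` for which the series
converges. -/
theorem catalan_series_radius_of_convergence (A B : ℝ) (hA : A ≠ 0) (hB : B ≠ 0) :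
    IsLUB {x : ℝ | ∃ w : ℝ, |w| = x ∧
        Summable (fun i : ℕ =>
          (catalan i : ℝ) * A ^ (i + 1) * B ^ i * w ^ (2 * i + 1))}
      (1 / (2 * Real.sqrt |A * B|)) := by
  set m : ℝ := |A * B| with hm_def
  have hm : 0 < m := abs_pos.mpr (mul_ne_zero hA hB)
  set R : ℝ := 1 / (2 * Real.sqrt m) with hR_def
  have hR : 0 < R := by positivity
  have hR2 : R ^ 2 = 1 / (4 * m) := by
    rw [hR_def, div_pow, mul_pow, Real.sq_sqrt hm.le]
    norm_num
  constructor
  · -- upper bound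
    rintro x ⟨w, hwx, hsum⟩
    by_contra hx
    push_neg at hx
    have hw0 : w ≠ 0 := by
      intro h; rw [h, abs_zero] at hwx; exact absurd (hwx ▸ hx) (not_lt.mpr hR.le)
    set q : ℝ := m * w ^ 2 with hq_def
    have hq0 : 0 < q := by positivity
    have hr1 : 1 < 4 * q := by
      have hx2 : R ^ 2 < x ^ 2 := by
        apply pow_lt_pow_left₀ hx hR.le; norm_num
      rw [hR2] at hx2
      have : 1 / (4 * m) < w ^ 2 := by rwa [← hwx, sq_abs] at hx2
      have := (div_lt_iff₀ (by positivity : (0:ℝ) < 4 * m)).mp this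
      calc (1:ℝ) < w ^ 2 * (4 * m) := this
        _ = 4 * q := by rw [hq_def]; ring
    have hc : 0 < |A| * |w| / 4 := by positivity
    have hlo := (isLittleO_pow_const_const_pow_of_one_lt (R := ℝ) 2 hr1).def hc
    have htend := hsum.tendsto_atTop_zero
    have hsmall : ∀ᶠ i : ℕ in atTop,
        |(catalan i : ℝ) * A ^ (i + 1) * B ^ i * w ^ (2 * i + 1)| < 1 := by
      have := htend.abs
      rw [abs_zero] at this
      exact this.eventually_lt_const one_pos |>.mono fun i h => h
    obtain ⟨n, hn1, hlon, hsn⟩ :=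
      ((eventually_ge_atTop 1).and (hlo.and hsmall)).exists
    have hcat := four_pow_le_cat n hn1
    have hterm : 1 ≤ |(catalan n : ℝ) * A ^ (n + 1) * B ^ n * w ^ (2 * n + 1)| := by
      rw [term_abs]
      have hpos : (0:ℝ) < 2 * n * (n + 1) := by positivity
      rw [← mul_le_mul_iff_right₀ hpos, mul_one]
      have key : 2 * (n:ℝ) * (n + 1) ≤ |A| * |w| * (4 * q) ^ n := by
        have h2 : (2 * (n:ℝ) * (n + 1)) ≤ 4 * (n:ℝ) ^ 2 := by
          have : (1:ℝ) ≤ n := by exact_mod_cast hn1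
          nlinarith
        have h3 : 4 * (n:ℝ) ^ 2 ≤ |A| * |w| * (4 * q) ^ n := by
          have := hlon
          simp only [Real.norm_eq_abs, norm_pow, Nat.abs_cast] at this
          have habs : |4 * q| = 4 * q := abs_of_nonneg (by positivity)
          rw [habs] at this
          nlinarith [this]
        linarith
      calc 2 * (n:ℝ) * (n + 1)
          ≤ |A| * |w| * (4 * q) ^ n := key
        _ = |A| * |w| * ((4:ℝ) ^ n * q ^ n) := by rw [mul_pow]
        _ ≤ |A| * |w| * ((2 * n * (n + 1) * catalan n) * q ^ n) := by
            have := mul_le_mul_of_nonneg_right hcat (le_of_lt (pow_pos hq0 n))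
            have hAw : (0:ℝ) ≤ |A| * |w| := by positivity
            nlinarith [this]
        _ = 2 * n * (n + 1) * (|A| * |w| * (↑(catalan n) * q ^ n)) := by ring
    exact absurd hsn (not_lt.mpr hterm)
  · -- least upper bound
    intro b hb
    by_contra hbR
    push_neg at hbR
    have h0 : (0:ℝ) ∈ {x : ℝ | ∃ w : ℝ, |w| = x ∧
        Summable (fun i : ℕ =>
          (catalan i : ℝ) * A ^ (i + 1) * B ^ i * w ^ (2 * i + 1))} := by
      refine ⟨0, abs_zero, ?_⟩
      convert summable_zero with i
      simp [pow_succ]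
    have hb0 : 0 ≤ b := hb h0
    set x : ℝ := (b + R) / 2 with hx_def
    have hbx : b < x := by rw [hx_def]; linarith
    have hxR : x < R := by rw [hx_def]; linarith
    have hx0 : 0 ≤ x := by linarith
    have hmem : x ∈ {x : ℝ | ∃ w : ℝ, |w| = x ∧
        Summable (fun i : ℕ =>
          (catalan i : ℝ) * A ^ (i + 1) * B ^ i * w ^ (2 * i + 1))} := by
      refine ⟨x, abs_of_nonneg hx0, ?_⟩
      rw [← summable_abs_iff]
      have hq_def : ∃ q : ℝ, q = m * x ^ 2 := ⟨_, rfl⟩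
      obtain ⟨q, hq_def⟩ := hq_def
      have hq0 : 0 ≤ q := by rw [hq_def]; positivity
      have hr1 : 4 * q < 1 := by
        rcases eq_or_lt_of_le hx0 with h | h
        · rw [hq_def, ← h]; norm_num
        · have hx2 : x ^ 2 < R ^ 2 := by
            apply pow_lt_pow_left₀ hxR hx0; norm_num
          rw [hR2] at hx2
          have := (lt_div_iff₀ (by positivity : (0:ℝ) < 4 * m)).mp hx2
          calc 4 * q = x ^ 2 * (4 * m) := by rw [hq_def]; ring
            _ < 1 := this
      have hgeo : Summable (fun i : ℕ => |A| * x * (4 * q) ^ i) :=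
        (summable_geometric_of_lt_one (by linarith) hr1).mul_left _
      refine Summable.of_nonneg_of_le (fun i => abs_nonneg _) (fun i => ?_) hgeo
      · 
        rw [term_abs, ← hm_def, ← hq_def]
        have : (catalan i : ℝ) * q ^ i ≤ (4 * q) ^ i := by
          rw [mul_pow]
          exact mul_le_mul_of_nonneg_right (cat_le_four_pow i) (pow_nonneg hq0 i)
        have hAx : (0:ℝ) ≤ |A| * x := by positivity
        calc |A| * |x| * ((catalan i : ℝ) * q ^ i)
            = |A| * x * ((catalan i : ℝ) * q ^ i) := by rw [abs_of_nonneg hx0]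
          _ ≤ |A| * x * (4 * q) ^ i := mul_le_mul_of_nonneg_left this hAx
    exact absurd (hb hmem) (not_le.mpr hbx)
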